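/- For any ℓ ≥ 1, any complex numbers c₁, …, c_ℓ with |c_i| = 1 for all i, and any δ > 0, there exists a strictly increasing sequence of positive integers n₁ < n₂ < n₃ < … with n_j → ∞ and sup_j (n_{j+1} − n_j) < ∞, such that Σ_{i=1}^ℓ |1 − c_i^{n_j}| < δ for every j. -/

import Mathlib

open Filter

/-- Key lemma: return times to any neighborhood of `1` are syndetic. -/
lemma key_syndetic (ℓ : ℕ) (c : Fin ℓ → ℂ) (hc : ∀ i, ‖c i‖ = 1)
    (ε : ℝ) (hε : 0 < ε) :
    ∃ C : ℕ, ∀ m : ℕ, ∃ n : ℕ, m < n ∧ n ≤ m + C ∧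
      ∀ i, ‖1 - c i ^ n‖ < ε := by
  have hnorm : ∀ i, ‖c i‖ = 1 := by
    intro i; exact hc i
  set f : ℕ → (Fin ℓ → ℂ) := fun n i => c i ^ n with hf
  have hb : Set.range f ⊆ Metric.closedBall (0 : Fin ℓ → ℂ) 1 := by
    rintro _ ⟨n, rfl⟩
    rw [Metric.mem_closedBall, dist_zero_right]
    refine pi_norm_le_iff_of_nonneg zero_le_one |>.mpr fun i => ?_
    simp [hf, norm_pow, hnorm i]
  have htb : TotallyBounded (Set.range f) :=
    (isCompact_closedBall (0 : Fin ℓ → ℂ) 1).totallyBounded.subset hb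
  obtain ⟨t, hts, htfin, hcov⟩ := totallyBounded_iff_subset.mp htb
    {p | dist p.1 p.2 < ε / 2} (Metric.dist_mem_uniformity (by linarith))
  classical
  -- pick an index for each point of the net
  have hex : ∀ y ∈ t, ∃ m, f m = y := fun y hy => hts hy
  set k : (Fin ℓ → ℂ) → ℕ := fun y => if h : ∃ m, f m = y then h.choose else 0 with hk
  set C : ℕ := htfin.toFinset.sup k + 1 with hC
  refine ⟨C, fun m => ?_⟩
  have hmem : f (m + C) ∈ ⋃ y ∈ t, {x | (x, y) ∈ {p : (Fin ℓ → ℂ) × (Fin ℓ → ℂ) | dist p.1 p.2 < ε / 2}} :=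
    hcov (Set.mem_range_self _)
  simp only [Set.mem_iUnion, Set.mem_setOf_eq] at hmem
  obtain ⟨y, hyt, hdist⟩ := hmem
  have hky : f (k y) = y := by
    rw [hk]; simp only [dif_pos (hex y hyt)]; exact (hex y hyt).choose_spec
  have hkle : k y ≤ htfin.toFinset.sup k :=
    Finset.le_sup (htfin.mem_toFinset.mpr hyt)
  have hklt : k y < C := by omega
  refine ⟨m + C - k y, by omega, by omega, fun i => ?_⟩
  have hdi : dist (f (m + C) i) (f (k y) i) < ε / 2 := by
    calc dist (f (m + C) i) (f (k y) i) ≤ dist (f (m + C)) (f (k y)) := dist_le_pi_dist _ _ i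
      _ < ε / 2 := by rwa [hky]
  have hsplit : c i ^ (m + C) = c i ^ (k y) * c i ^ (m + C - k y) := by
    rw [← pow_add]; congr 1; omega
  have : ‖c i ^ (m + C) - c i ^ (k y)‖ < ε / 2 := by
    simpa [dist_eq_norm, hf] using hdi
  rw [hsplit] at this
  have heq : c i ^ (k y) * c i ^ (m + C - k y) - c i ^ (k y)
      = c i ^ (k y) * (c i ^ (m + C - k y) - 1) := by ring
  rw [heq, norm_mul, norm_pow, hnorm i, one_pow, one_mul] at this
  calc ‖1 - c i ^ (m + C - k y)‖ = ‖c i ^ (m + C - k y) - 1‖ := by rw [norm_sub_rev]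
    _ < ε / 2 := this
    _ < ε := by linarith

/-- For any `ℓ ≥ 1`, any complex numbers `c₁, …, c_ℓ` of modulus one, and any
`δ > 0`, there is a strictly increasing sequence of positive integers `n₁ < n₂ < …` tending to
infinity with bounded gaps, such that `Σ_{i} |1 − c_i^{n_j}| < δ` for every `j`. -/
theorem exists_bounded_gap_sequence_of_near_returns
    (ℓ : ℕ) (hℓ : 1 ≤ ℓ) (c : Fin ℓ → ℂ) (hc : ∀ i, ‖c i‖ = 1)
    (δ : ℝ) (hδ : 0 < δ) :
    ∃ n : ℕ → ℕ, StrictMono n ∧ (∀ j, 0 < n j) ∧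
      Filter.Tendsto n Filter.atTop Filter.atTop ∧
      (∃ C : ℕ, ∀ j, n (j + 1) - n j ≤ C) ∧
      ∀ j, ∑ i : Fin ℓ, ‖1 - c i ^ n j‖ < δ := by
  have hℓpos : (0 : ℝ) < ℓ := by exact_mod_cast hℓ
  have hε : 0 < δ / ℓ := div_pos hδ hℓpos
  obtain ⟨C, hC⟩ := key_syndetic ℓ c hc (δ / ℓ) hε
  choose g hg1 hg2 hg3 using hC
  set n : ℕ → ℕ := fun j => g^[j + 1] 0 with hn
  have hsucc : ∀ j, n (j + 1) = g (n j) := by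
    intro j; rw [hn]; exact Function.iterate_succ_apply' g (j + 1) 0
  have hform : ∀ j, n j = g (g^[j] 0) := by
    intro j; rw [hn]; exact Function.iterate_succ_apply' g j 0
  have hlt : ∀ j, n j < n (j + 1) := by
    intro j; rw [hsucc]; exact hg1 (n j)
  have hmono : StrictMono n := strictMono_nat_of_lt_succ hlt
  have hpos : ∀ j, 0 < n j := by
    intro j; rw [hform]; exact lt_of_le_of_lt (Nat.zero_le _) (hg1 _)
  refine ⟨n, hmono, hpos, hmono.tendsto_atTop, ⟨C, fun j => ?_⟩, fun j => ?_⟩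
  · rw [hsucc]; have := hg2 (n j); omega
  · have hret : ∀ i, ‖1 - c i ^ n j‖ < δ / ℓ := by
      rw [hform]; exact hg3 (g^[j] 0)
    calc ∑ i : Fin ℓ, ‖1 - c i ^ n j‖
        < ∑ _i : Fin ℓ, δ / ℓ := by
          refine Finset.sum_lt_sum_of_nonempty ?_ fun i _ => hret i
          exact Finset.univ_nonempty_iff.mpr ⟨⟨0, hℓ⟩⟩
      _ = δ := by
          rw [Finset.sum_const, Finset.card_univ, Fintype.card_fin, nsmul_eq_mul]
          field_simp
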